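/- Let X be a Banach space such that X* has Pelczynski's property (V), and let Y be a Banach space not containing an isomorphic copy of ℓ^∞. Then every bounded linear operator T : X* → Y is weakly compact. -/

import Mathlib

open scoped ENNReal

/-- `Y` contains an isomorphic copy of `ℓ^∞`. -/
def ContainsIsomorphicCopyOfLinfty (Y : Type) [NormedAddCommGroup Y] [NormedSpace ℝ Y] : Prop :=
  ∃ T : lp (fun _ : ℕ => ℝ) ∞ →L[ℝ] Y, ∃ c : ℝ, 0 < c ∧
    ∀ x : lp (fun _ : ℕ => ℝ) ∞, c * ‖x‖ ≤ ‖T x‖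

/-- An operator is weakly compact if the closure (in the weak topology) of the image of the
closed unit ball is weakly compact. -/
def IsWeaklyCompactOperator {Z W : Type} [NormedAddCommGroup Z] [NormedSpace ℝ Z]
    [NormedAddCommGroup W] [NormedSpace ℝ W] (T : Z →L[ℝ] W) : Prop :=
  IsCompact (closure (toWeakSpace ℝ W '' (T '' Metric.closedBall 0 1)))

/-- An operator is unconditionally converging if it maps weakly unconditionally Cauchy series
to unconditionally convergent (summable) series. -/
def IsUnconditionallyConverging {Z W : Type} [NormedAddCommGroup Z] [NormedSpace ℝ Z]
    [NormedAddCommGroup W] [NormedSpace ℝ W] (T : Z →L[ℝ] W) : Prop :=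
  ∀ x : ℕ → Z, (∀ f : StrongDual ℝ Z, Summable fun n => ‖f (x n)‖) →
    Summable fun n => T (x n)

/-- Pelczynski's property (V): every unconditionally converging operator out of `Z` is
weakly compact. -/
def PelczynskiPropertyV (Z : Type) [NormedAddCommGroup Z] [NormedSpace ℝ Z] : Prop :=
  ∀ (W : Type) (_ : NormedAddCommGroup W) (_ : @NormedSpace ℝ W _ _) (_ : @CompleteSpace W _)
    (T : Z →L[ℝ] W), IsUnconditionallyConverging T → IsWeaklyCompactOperator T


set_option maxHeartbeats 1000000
set_option synthInstance.maxHeartbeats 200000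

noncomputable section

abbrev Linfty : Type := lp (fun _ : ℕ => ℝ) ∞

lemma Linfty.abs_apply_le_norm (a : Linfty) (n : ℕ) : |a n| ≤ ‖a‖ := by
  simpa [Real.norm_eq_abs] using lp.norm_apply_le_norm ENNReal.top_ne_zero a n

lemma Linfty.norm_le_of_abs_le {a : Linfty} {c : ℝ} (hc : 0 ≤ c) (h : ∀ n, |a n| ≤ c) :
    ‖a‖ ≤ c :=
  lp.norm_le_of_forall_le hc (fun n => by simpa [Real.norm_eq_abs] using h n)

/-- Existence of the uniform bound for partial sums of a weakly unconditionally
Cauchy sequence, via Banach–Steinhaus. -/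
lemma exists_unif_bound {X : Type} [NormedAddCommGroup X] [NormedSpace ℝ X] [CompleteSpace X]
    (y : ℕ → X →L[ℝ] ℝ) (hyv : ∀ v : X, Summable fun k => |y k v|) :
    ∃ C : ℝ, 0 ≤ C ∧ ∀ v : X, ∑' k, |y k v| ≤ C * ‖v‖ := by
  classical
  set g : Finset ℕ × (ℕ → Bool) → X →L[ℝ] ℝ :=
    fun i => ∑ k ∈ i.1, (if i.2 k then (1 : ℝ) else -1) • y k with hgdef
  have hgapp : ∀ i v, g i v = ∑ k ∈ i.1, (if i.2 k then (1 : ℝ) else -1) * y k v := by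
    intro i v
    rw [hgdef]
    simp only [ContinuousLinearMap.sum_apply]
    refine Finset.sum_congr rfl fun k _ => ?_
    rw [ContinuousLinearMap.smul_apply, smul_eq_mul]
  have hpt : ∀ v, ∃ C, ∀ i, ‖g i v‖ ≤ C := by
    intro v
    refine ⟨∑' k, |y k v|, fun i => ?_⟩
    rw [Real.norm_eq_abs, hgapp]
    refine le_trans (Finset.abs_sum_le_sum_abs _ _) ?_
    have h2 : ∀ k ∈ i.1, |(if i.2 k then (1 : ℝ) else -1) * y k v| = |y k v| := by
      intro k _
      by_cases h : i.2 k <;> simp [h, abs_mul]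
    rw [Finset.sum_congr rfl h2]
    exact Summable.sum_le_tsum i.1 (fun _ _ => abs_nonneg _) (hyv v)
  obtain ⟨C, hCb⟩ := banach_steinhaus hpt
  have hCsum : ∀ (v : X) (u : Finset ℕ), ∑ k ∈ u, |y k v| ≤ max C 0 * ‖v‖ := by
    intro v u
    set σ : ℕ → Bool := fun k => decide (0 ≤ y k v) with hσ
    have h1 : ∑ k ∈ u, |y k v| = g (u, σ) v := by
      rw [hgapp]
      refine Finset.sum_congr rfl fun k _ => ?_
      by_cases h : 0 ≤ y k v
      · simp [hσ, h, abs_of_nonneg h]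
      · simp [hσ, h, abs_of_neg (lt_of_not_ge h)]
    rw [h1]
    calc g (u, σ) v ≤ |g (u, σ) v| := le_abs_self _
      _ = ‖g (u, σ) v‖ := (Real.norm_eq_abs _).symm
      _ ≤ ‖g (u, σ)‖ * ‖v‖ := (g (u, σ)).le_opNorm v
      _ ≤ max C 0 * ‖v‖ :=
          mul_le_mul_of_nonneg_right (le_trans (hCb _) (le_max_left _ _)) (norm_nonneg v)
  exact ⟨max C 0, le_max_right _ _,
    fun v => Summable.tsum_le_of_sum_le (hyv v) (fun u => hCsum v u)⟩

/-- The canonical operator `ℓ∞ → X*` attached to a weak* unconditionally Cauchy family. -/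
lemma exists_ellinfty_operator {X : Type} [NormedAddCommGroup X] [NormedSpace ℝ X]
    (y : ℕ → X →L[ℝ] ℝ) (C : ℝ) (hC0 : 0 ≤ C)
    (hyv : ∀ v : X, Summable fun k => |y k v|)
    (hCt : ∀ v : X, ∑' k, |y k v| ≤ C * ‖v‖) :
    ∃ S : Linfty →L[ℝ] (X →L[ℝ] ℝ), ∀ (a : Linfty) (v : X), S a v = ∑' k, a k * y k v := by
  have hsumS : ∀ (a : Linfty) (v : X), Summable fun k => a k * y k v := by
    intro a v
    have h1 : ∀ k, |a k * y k v| ≤ ‖a‖ * |y k v| := by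
      intro k
      rw [abs_mul]
      exact mul_le_mul_of_nonneg_right (Linfty.abs_apply_le_norm a k) (abs_nonneg _)
    refine Summable.of_abs ?_
    exact Summable.of_nonneg_of_le (fun k => abs_nonneg _) h1 ((hyv v).mul_left ‖a‖)
  have hSbound : ∀ (a : Linfty) (v : X), ‖∑' k, a k * y k v‖ ≤ C * ‖a‖ * ‖v‖ := by
    intro a v
    have h1 : ∀ k, |a k * y k v| ≤ ‖a‖ * |y k v| := by
      intro k
      rw [abs_mul]
      exact mul_le_mul_of_nonneg_right (Linfty.abs_apply_le_norm a k) (abs_nonneg _)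
    have habs : Summable fun k => |a k * y k v| := (hsumS a v).abs
    rw [Real.norm_eq_abs]
    calc |∑' k, a k * y k v| ≤ ∑' k, |a k * y k v| := by
          have h2 := norm_tsum_le_tsum_norm (f := fun k => a k * y k v) habs
          simp only [Real.norm_eq_abs] at h2
          exact h2
      _ ≤ ∑' k, ‖a‖ * |y k v| := Summable.tsum_le_tsum h1 habs ((hyv v).mul_left ‖a‖)
      _ = ‖a‖ * ∑' k, |y k v| := tsum_mul_left
      _ ≤ ‖a‖ * (C * ‖v‖) := mul_le_mul_of_nonneg_left (hCt v) (norm_nonneg a)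
      _ = C * ‖a‖ * ‖v‖ := by ring
  let S₀ : Linfty → (X →L[ℝ] ℝ) := fun a =>
    LinearMap.mkContinuous
      { toFun := fun v => ∑' k, a k * y k v
        map_add' := fun v w => by
          have h : ∀ k, a k * y k (v + w) = a k * y k v + a k * y k w := by
            intro k; rw [map_add]; ring
          show ∑' k, a k * y k (v + w) = (∑' k, a k * y k v) + ∑' k, a k * y k w
          rw [tsum_congr h]
          exact Summable.tsum_add (hsumS a v) (hsumS a w)
        map_smul' := fun c v => by
          have h : ∀ k, a k * y k (c • v) = c * (a k * y k v) := by
            intro k; rw [map_smul, smul_eq_mul]; ring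
          show ∑' k, a k * y k (c • v) = c • ∑' k, a k * y k v
          rw [tsum_congr h, tsum_mul_left, smul_eq_mul] }
      (C * ‖a‖)
      (fun v => by simpa using hSbound a v)
  have hS₀app : ∀ (a : Linfty) (v : X), S₀ a v = ∑' k, a k * y k v := fun a v => rfl
  have hS₀add : ∀ a b : Linfty, S₀ (a + b) = S₀ a + S₀ b := by
    intro a b
    refine ContinuousLinearMap.ext fun v => ?_
    rw [ContinuousLinearMap.add_apply, hS₀app, hS₀app, hS₀app]
    have h : ∀ k, (a + b) k * y k v = a k * y k v + b k * y k v := by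
      intro k
      rw [lp.coeFn_add, Pi.add_apply]; ring
    rw [tsum_congr h]
    exact Summable.tsum_add (hsumS a v) (hsumS b v)
  have hS₀smul : ∀ (c : ℝ) (a : Linfty), S₀ (c • a) = c • S₀ a := by
    intro c a
    refine ContinuousLinearMap.ext fun v => ?_
    rw [ContinuousLinearMap.smul_apply, hS₀app, hS₀app]
    have h : ∀ k, (c • a) k * y k v = c * (a k * y k v) := by
      intro k
      rw [lp.coeFn_smul, Pi.smul_apply, smul_eq_mul]; ring
    rw [tsum_congr h, tsum_mul_left]
    simp [smul_eq_mul]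
  have hS₀norm : ∀ a : Linfty, ‖S₀ a‖ ≤ C * ‖a‖ := by
    intro a
    refine ContinuousLinearMap.opNorm_le_bound _ (mul_nonneg hC0 (norm_nonneg a)) fun v => ?_
    rw [hS₀app]
    exact hSbound a v
  exact ⟨LinearMap.mkContinuous
    { toFun := S₀, map_add' := hS₀add, map_smul' := hS₀smul } C
    (fun a => hS₀norm a), hS₀app⟩


/-- Rosenthal-type combinatorial lemma for superadditive monotone set functions. -/
lemma rosenthal_aux (ε : ℝ) (hε : 0 < ε) :
    ∀ (n : ℕ) (μ : ℕ → Set ℕ → ℝ),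
      (∀ k, Monotone (μ k)) →
      (∀ k A B, Disjoint A B → μ k A + μ k B ≤ μ k (A ∪ B)) →
      (∀ k, μ k Set.univ ≤ n * ε) →
      ∀ M₀ : Set ℕ, M₀.Infinite →
      ∃ M, M ⊆ M₀ ∧ M.Infinite ∧ ∀ k ∈ M, μ k (M \ {k}) ≤ ε := by
  intro n
  induction n with
  | zero =>
    intro μ hm hs hb M₀ hM₀
    refine ⟨M₀, le_refl _, hM₀, fun k _ => ?_⟩
    have h1 : μ k (M₀ \ {k}) ≤ μ k Set.univ := hm k (Set.subset_univ _)
    have h2 : μ k Set.univ ≤ 0 := by simpa using hb k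
    linarith
  | succ n ih =>
    intro μ hm hs hb M₀ hM₀
    classical
    -- partition a subset of M₀ into countably many infinite sets
    set g : ℕ → ℕ := fun m => (Set.Infinite.natEmbedding M₀ hM₀ m : ℕ) with hg
    have hginj : Function.Injective g := fun a b hab => by
      have := (Set.Infinite.natEmbedding M₀ hM₀).injective (Subtype.ext hab); exact this
    have hgmem : ∀ m, g m ∈ M₀ := fun m => (Set.Infinite.natEmbedding M₀ hM₀ m).2
    set e : ℕ → ℕ → ℕ := fun p q => g (Nat.pairEquiv (p, q)) with he
    have heinj : ∀ p q p' q', e p q = e p' q' → p = p' ∧ q = q' := by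
      intro p q p' q' h
      have := hginj h
      have h2 := Nat.pairEquiv.injective this
      exact ⟨congrArg Prod.fst h2, congrArg Prod.snd h2⟩
    set N : ℕ → Set ℕ := fun p => Set.range (e p) with hN
    have hNsub : ∀ p, N p ⊆ M₀ := by rintro p m ⟨q, rfl⟩; exact hgmem _
    have hNinf : ∀ p, (N p).Infinite := by
      intro p
      exact Set.infinite_range_of_injective (fun a b hab => (heinj p a p b hab).2)
    have hNdisj : ∀ p p', p ≠ p' → Disjoint (N p) (N p') := by
      intro p p' hpp'
      rw [Set.disjoint_left]
      rintro m ⟨q, rfl⟩ ⟨q', hq'⟩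
      exact hpp' ((heinj p' q' p q hq').1).symm
    by_cases hcase : ∃ p, {k | k ∈ N p ∧ μ k (N p \ {k}) ≤ ε}.Infinite
    · obtain ⟨p, hp⟩ := hcase
      refine ⟨{k | k ∈ N p ∧ μ k (N p \ {k}) ≤ ε}, ?_, hp, ?_⟩
      · intro k hk; exact hNsub p hk.1
      · intro k hk
        refine le_trans (hm k ?_) hk.2
        intro m hm'
        exact ⟨hm'.1.1, hm'.2⟩
    · push_neg at hcase
      -- choose witnesses with large mass
      have hch : ∀ p, ∃ k, k ∈ N p ∧ ε < μ k (N p \ {k}) := by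
        intro p
        have : ((N p) \ {k | k ∈ N p ∧ μ k (N p \ {k}) ≤ ε}).Infinite :=
          (hNinf p).diff (hcase p)
        obtain ⟨k, hk⟩ := this.nonempty
        refine ⟨k, hk.1, ?_⟩
        by_contra h
        push_neg at h
        exact hk.2 ⟨hk.1, h⟩
      choose κ hκmem hκbig using hch
      have hκinj : Function.Injective κ := by
        intro p p' h
        by_contra hne
        exact (Set.disjoint_left.1 (hNdisj p p' hne)) (hκmem p) (h ▸ hκmem p')
      set G : ℕ → Set ℕ := fun p => N p \ {κ p} with hG
      set ν : ℕ → Set ℕ → ℝ := fun p A => μ (κ p) ((κ '' A) \ G p) with hν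
      have hνm : ∀ p, Monotone (ν p) := by
        intro p A B hAB
        exact hm (κ p) (Set.diff_subset_diff_left (Set.image_mono hAB))
      have hνs : ∀ p A B, Disjoint A B → ν p A + ν p B ≤ ν p (A ∪ B) := by
        intro p A B hAB
        have hdisj : Disjoint ((κ '' A) \ G p) ((κ '' B) \ G p) := by
          refine Disjoint.mono Set.diff_subset Set.diff_subset ?_
          exact (Set.disjoint_image_iff hκinj).2 hAB
        have hun : ((κ '' A) \ G p) ∪ ((κ '' B) \ G p) = (κ '' (A ∪ B)) \ G p := by
          rw [Set.image_union, Set.union_diff_distrib]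
        calc ν p A + ν p B ≤ μ (κ p) (((κ '' A) \ G p) ∪ ((κ '' B) \ G p)) :=
              hs (κ p) _ _ hdisj
          _ = ν p (A ∪ B) := by rw [hun]
      have hνb : ∀ p, ν p Set.univ ≤ n * ε := by
        intro p
        have h1 : μ (κ p) (G p) + ν p Set.univ ≤ μ (κ p) Set.univ := by
          have hd : Disjoint (G p) ((κ '' Set.univ) \ G p) := Set.disjoint_sdiff_right
          refine le_trans (hs (κ p) _ _ hd) (hm (κ p) (Set.subset_univ _))
        have h2 : ε < μ (κ p) (G p) := hκbig p
        have h3 : μ (κ p) Set.univ ≤ (n + 1) * ε := by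
          have := hb (κ p); push_cast at this ⊢; linarith
        linarith
      obtain ⟨M', _, hM'inf, hM'⟩ := ih ν hνm hνs hνb Set.univ Set.infinite_univ
      refine ⟨κ '' M', ?_, hM'inf.image (hκinj.injOn), ?_⟩
      · rintro m ⟨p, _, rfl⟩; exact hNsub p (hκmem p)
      · rintro m ⟨p, hp, rfl⟩
        have hsub : (κ '' M') \ {κ p} ⊆ (κ '' (M' \ {p})) \ G p := by
          rintro m ⟨⟨q, hq, rfl⟩, hne⟩
          have hqp : q ≠ p := fun h => by simp [h] at hne
          constructor
          · exact ⟨q, ⟨hq, hqp⟩, rfl⟩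
          · intro hGm
            exact (Set.disjoint_left.1 (hNdisj q p hqp)) (hκmem q) hGm.1
        exact le_trans (hm (κ p) hsub) (hM' p hp)

section Mu

variable {Y : Type} [NormedAddCommGroup Y] [NormedSpace ℝ Y]

/-- The set of values `|g (R a)|` over `a` in the unit ball supported on `B`. -/
def muSet (R : Linfty →L[ℝ] Y) (g : Y →L[ℝ] ℝ) (B : Set ℕ) : Set ℝ :=
  {r | ∃ a : Linfty, ‖a‖ ≤ 1 ∧ (∀ n, n ∉ B → a n = 0) ∧ r = |g (R a)|}

/-- The "measure" of `B`: the supremum of `|g (R a)|` over the unit ball of `ℓ∞(B)`. -/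
def mu (R : Linfty →L[ℝ] Y) (g : Y →L[ℝ] ℝ) (B : Set ℕ) : ℝ :=
  sSup (muSet R g B)

lemma muSet_zero_mem (R : Linfty →L[ℝ] Y) (g : Y →L[ℝ] ℝ) (B : Set ℕ) :
    (0 : ℝ) ∈ muSet R g B := by
  refine ⟨0, by simp, fun n _ => ?_, by simp⟩
  rw [lp.coeFn_zero]; rfl

lemma muSet_ub (R : Linfty →L[ℝ] Y) {g : Y →L[ℝ] ℝ} (hg : ‖g‖ = 1) {B : Set ℕ} {r : ℝ}
    (hr : r ∈ muSet R g B) : r ≤ ‖R‖ := by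
  obtain ⟨a, ha1, -, rfl⟩ := hr
  have h1 := g.le_opNorm (R a)
  rw [hg, one_mul] at h1
  have h2 : ‖R a‖ ≤ ‖R‖ * ‖a‖ := R.le_opNorm a
  have h3 : ‖R‖ * ‖a‖ ≤ ‖R‖ := by nlinarith [norm_nonneg R, norm_nonneg a]
  calc |g (R a)| = ‖g (R a)‖ := (Real.norm_eq_abs _).symm
    _ ≤ ‖R a‖ := h1
    _ ≤ ‖R‖ := le_trans h2 h3

lemma muSet_bdd (R : Linfty →L[ℝ] Y) {g : Y →L[ℝ] ℝ} (hg : ‖g‖ = 1) (B : Set ℕ) :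
    BddAbove (muSet R g B) :=
  ⟨‖R‖, fun _ hr => muSet_ub R hg hr⟩

lemma mu_nonneg (R : Linfty →L[ℝ] Y) {g : Y →L[ℝ] ℝ} (hg : ‖g‖ = 1) (B : Set ℕ) :
    0 ≤ mu R g B :=
  le_csSup (muSet_bdd R hg B) (muSet_zero_mem R g B)

lemma mu_mono (R : Linfty →L[ℝ] Y) {g : Y →L[ℝ] ℝ} (hg : ‖g‖ = 1) :
    Monotone (mu R g) := by
  intro B B' hBB'
  refine csSup_le_csSup (muSet_bdd R hg B') ⟨0, muSet_zero_mem R g B⟩ ?_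
  rintro r ⟨a, h1, h2, h3⟩
  exact ⟨a, h1, fun n hn => h2 n (fun hB => hn (hBB' hB)), h3⟩

lemma mu_le_norm (R : Linfty →L[ℝ] Y) {g : Y →L[ℝ] ℝ} (hg : ‖g‖ = 1) (B : Set ℕ) :
    mu R g B ≤ ‖R‖ :=
  csSup_le ⟨0, muSet_zero_mem R g B⟩ (fun _ hr => muSet_ub R hg hr)

lemma mu_superadd (R : Linfty →L[ℝ] Y) {g : Y →L[ℝ] ℝ} (hg : ‖g‖ = 1)
    (B B' : Set ℕ) (hBB' : Disjoint B B') :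
    mu R g B + mu R g B' ≤ mu R g (B ∪ B') := by
  rw [← le_sub_iff_add_le]
  refine csSup_le ⟨0, muSet_zero_mem R g B⟩ ?_
  rintro r ⟨a, ha1, ha2, rfl⟩
  rw [le_sub_iff_add_le, add_comm, ← le_sub_iff_add_le]
  refine csSup_le ⟨0, muSet_zero_mem R g B'⟩ ?_
  rintro r' ⟨b, hb1, hb2, rfl⟩
  rw [le_sub_iff_add_le]
  set σ : ℝ := if g (R a) < 0 then -1 else 1 with hσ
  set τ : ℝ := if g (R b) < 0 then -1 else 1 with hτ
  have hσ1 : |σ| = 1 := by rw [hσ]; split <;> simp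
  have hτ1 : |τ| = 1 := by rw [hτ]; split <;> simp
  set c : Linfty := σ • a + τ • b with hc
  have hcapp : ∀ n, c n = σ * a n + τ * b n := by
    intro n
    rw [hc, lp.coeFn_add, Pi.add_apply, lp.coeFn_smul, lp.coeFn_smul,
      Pi.smul_apply, Pi.smul_apply, smul_eq_mul, smul_eq_mul]
  have hc1 : ‖c‖ ≤ 1 := by
    refine Linfty.norm_le_of_abs_le zero_le_one fun n => ?_
    rw [hcapp]
    by_cases hnB : n ∈ B
    · have hb0 : b n = 0 := hb2 n (Set.disjoint_left.1 hBB' hnB)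
      rw [hb0, mul_zero, add_zero, abs_mul, hσ1, one_mul]
      exact le_trans (Linfty.abs_apply_le_norm a n) ha1
    · have ha0 : a n = 0 := ha2 n hnB
      rw [ha0, mul_zero, zero_add, abs_mul, hτ1, one_mul]
      exact le_trans (Linfty.abs_apply_le_norm b n) hb1
  have hc2 : ∀ n, n ∉ B ∪ B' → c n = 0 := by
    intro n hn
    rw [Set.mem_union] at hn
    push_neg at hn
    rw [hcapp, ha2 n hn.1, hb2 n hn.2, mul_zero, mul_zero, add_zero]
  have hval : g (R c) = |g (R a)| + |g (R b)| := by
    have h1 : R c = σ • R a + τ • R b := by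
      rw [hc, map_add, map_smul, map_smul]
    rw [h1, map_add, map_smul, map_smul, smul_eq_mul, smul_eq_mul]
    have h2 : σ * g (R a) = |g (R a)| := by
      rw [hσ]
      split
      · rw [abs_of_neg (by assumption)]; ring
      · rw [abs_of_nonneg (le_of_not_gt (by assumption))]; ring
    have h3 : τ * g (R b) = |g (R b)| := by
      rw [hτ]
      split
      · rw [abs_of_neg (by assumption)]; ring
      · rw [abs_of_nonneg (le_of_not_gt (by assumption))]; ring
    rw [h2, h3]
  have hmemc : |g (R c)| ∈ muSet R g (B ∪ B') := ⟨c, hc1, hc2, rfl⟩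
  have h4 : |g (R c)| = |g (R a)| + |g (R b)| := by
    rw [hval, abs_of_nonneg (add_nonneg (abs_nonneg _) (abs_nonneg _))]
  calc |g (R b)| + |g (R a)| = |g (R c)| := by rw [h4]; ring
    _ ≤ mu R g (B ∪ B') := le_csSup (muSet_bdd R hg _) hmemc

lemma mu_eval (R : Linfty →L[ℝ] Y) {g : Y →L[ℝ] ℝ} (hg : ‖g‖ = 1)
    (B : Set ℕ) (a : Linfty) (ha : ∀ n, n ∉ B → a n = 0) :
    |g (R a)| ≤ ‖a‖ * mu R g B := by
  rcases eq_or_ne a 0 with rfl | ha0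
  · simp
  · have hna : 0 < ‖a‖ := norm_pos_iff.2 ha0
    set b : Linfty := ‖a‖⁻¹ • a with hb
    have hb1 : ‖b‖ ≤ 1 := by
      rw [hb, norm_smul, norm_inv, norm_norm, inv_mul_cancel₀ hna.ne']
    have hb2 : ∀ n, n ∉ B → b n = 0 := by
      intro n hn
      rw [hb, lp.coeFn_smul, Pi.smul_apply, ha n hn, smul_zero]
    have h1 : |g (R b)| ≤ mu R g B := le_csSup (muSet_bdd R hg B) ⟨b, hb1, hb2, rfl⟩
    have h2 : g (R a) = ‖a‖ * g (R b) := by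
      rw [hb, map_smul, map_smul, smul_eq_mul, ← mul_assoc,
        mul_inv_cancel₀ hna.ne', one_mul]
    rw [h2, abs_mul, abs_of_nonneg hna.le]
    exact mul_le_mul_of_nonneg_left h1 hna.le

end Mu

/-- The extension operator `ℓ∞ → ℓ∞` induced by an injection `ι : ℕ → ℕ`
(transport along `ι`, zero off the range). -/
lemma exists_extension_op (ι : ℕ → ℕ) (hι : Function.Injective ι) :
    ∃ J : Linfty →L[ℝ] Linfty,
      (∀ (a : Linfty) (q : ℕ), J a (ι q) = a q) ∧
      (∀ (a : Linfty) (n : ℕ), (¬ ∃ q, ι q = n) → J a n = 0) ∧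
      (∀ (a : Linfty) (n : ℕ), |J a n| ≤ ‖a‖) := by
  classical
  set jf : Linfty → ℕ → ℝ := fun a m => if h : ∃ q, ι q = m then a h.choose else 0 with hjf
  have hjι : ∀ (a : Linfty) (q : ℕ), jf a (ι q) = a q := by
    intro a q
    have h : ∃ q', ι q' = ι q := ⟨q, rfl⟩
    rw [hjf]
    simp only
    rw [dif_pos h]
    exact congrArg a (hι h.choose_spec)
  have hjz : ∀ (a : Linfty) (n : ℕ), (¬ ∃ q, ι q = n) → jf a n = 0 := by
    intro a n hn
    rw [hjf]
    simp only
    rw [dif_neg hn]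
  have hjb : ∀ (a : Linfty) (n : ℕ), |jf a n| ≤ ‖a‖ := by
    intro a n
    rw [hjf]
    simp only
    split
    · exact Linfty.abs_apply_le_norm a _
    · simpa using norm_nonneg a
  have hjmem : ∀ a : Linfty, Memℓp (jf a) ∞ := by
    intro a
    refine memℓp_infty ⟨‖a‖, ?_⟩
    rintro r ⟨n, rfl⟩
    simpa [Real.norm_eq_abs] using hjb a n
  refine ⟨LinearMap.mkContinuous
    { toFun := fun a => ⟨jf a, hjmem a⟩
      map_add' := fun a b => by
        refine lp.ext (funext fun n => ?_)
        have h1 : ((⟨jf (a + b), hjmem _⟩ : Linfty) : ℕ → ℝ) n = jf (a + b) n := rfl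
        have h2 : (((⟨jf a, hjmem a⟩ : Linfty) + ⟨jf b, hjmem b⟩ : Linfty) : ℕ → ℝ) n
            = jf a n + jf b n := by
          rw [lp.coeFn_add]; rfl
        rw [h1, h2, hjf]
        simp only
        split
        · rw [lp.coeFn_add]; rfl
        · simp
      map_smul' := fun c a => by
        refine lp.ext (funext fun n => ?_)
        have h2 : (((c • ⟨jf a, hjmem a⟩ : Linfty)) : ℕ → ℝ) n = c * jf a n := by
          rw [lp.coeFn_smul]; rfl
        rw [RingHom.id_apply, h2]
        show jf (c • a) n = c * jf a n
        rw [hjf]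
        simp only
        split
        · rw [lp.coeFn_smul]; rfl
        · simp }
    1
    (fun a => by
      rw [one_mul]
      exact Linfty.norm_le_of_abs_le (norm_nonneg a) (fun n => hjb a n)),
    fun a q => hjι a q, fun a n h => hjz a n h, fun a n => hjb a n⟩

/-- Key construction: a non-unconditionally-converging operator out of a dual space
  yields an isomorphic embedding of `ℓ∞` into the target space. -/
lemma not_summable_embeds_linfty
    {X Y : Type} [NormedAddCommGroup X] [NormedSpace ℝ X] [CompleteSpace X]
    [NormedAddCommGroup Y] [NormedSpace ℝ Y] [CompleteSpace Y]
    (T : StrongDual ℝ X →L[ℝ] Y)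
    (x : ℕ → StrongDual ℝ X)
    (hwuc : ∀ f : StrongDual ℝ (StrongDual ℝ X), Summable fun n => ‖f (x n)‖)
    (hns : ¬ Summable fun n => T (x n)) :
    ∃ T : Linfty →L[ℝ] Y, ∃ c : ℝ, 0 < c ∧ ∀ x : Linfty, c * ‖x‖ ≤ ‖T x‖ := by
  classical
  rw [summable_iff_vanishing_norm] at hns
  push_neg at hns
  obtain ⟨ε, hε, hF⟩ := hns
  choose t ht hnorm using hF
  -- disjoint blocks
  set A : ℕ → Finset ℕ := fun k => Nat.rec ∅ (fun _ p => p ∪ t p) k with hA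
  have hAsucc : ∀ k, A (k + 1) = A k ∪ t (A k) := fun k => rfl
  have hAmono : Monotone A := monotone_nat_of_le_succ
    (fun k => by rw [hAsucc]; exact Finset.subset_union_left)
  have htA : ∀ k, t (A k) ⊆ A (k + 1) := fun k => by
    rw [hAsucc]; exact Finset.subset_union_right
  have hdisj : ∀ j k, j < k → Disjoint (t (A k)) (t (A j)) := by
    intro j k hjk
    exact (ht (A k)).mono_right ((htA j).trans (hAmono hjk))
  set y : ℕ → StrongDual ℝ X := fun k => ∑ n ∈ t (A k), x n with hy
  have hTy : ∀ k, ε ≤ ‖T (y k)‖ := by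
    intro k
    have h1 : T (y k) = ∑ n ∈ t (A k), T (x n) := map_sum T _ _
    rw [h1]; exact hnorm (A k)
  -- weak unconditional Cauchy estimates on evaluations
  have hyv : ∀ v : X, Summable fun k => |y k v| := by
    intro v
    have hxv : Summable fun n => ‖x n v‖ := by
      have := hwuc (NormedSpace.inclusionInDoubleDual ℝ X v)
      simpa [NormedSpace.dual_def] using this
    have hblock : Summable fun k => ∑ n ∈ t (A k), ‖x n v‖ := by
      refine summable_of_sum_le (c := ∑' n, ‖x n v‖)
        (fun k => Finset.sum_nonneg fun n _ => norm_nonneg _) ?_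
      intro u
      rw [← Finset.sum_biUnion]
      · exact Summable.sum_le_tsum _ (fun _ _ => norm_nonneg _) hxv
      · intro j _ k _ hjk
        rcases lt_or_gt_of_ne hjk with h | h
        · exact (hdisj j k h).symm
        · exact hdisj k j h
    refine hblock.of_nonneg_of_le (fun k => abs_nonneg _) (fun k => ?_)
    calc |y k v| = ‖(∑ n ∈ t (A k), x n) v‖ := rfl
      _ = ‖∑ n ∈ t (A k), x n v‖ := by rw [ContinuousLinearMap.sum_apply]
      _ ≤ ∑ n ∈ t (A k), ‖x n v‖ := norm_sum_le _ _
  obtain ⟨C, hC0, hCt⟩ := exists_unif_bound y hyv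
  obtain ⟨S, hSapp⟩ := exists_ellinfty_operator y C hC0 hyv hCt
  -- the basis vectors
  set e : ℕ → Linfty := fun k => lp.single ∞ k (1 : ℝ) with he
  have hee : ∀ k n, e k n = if n = k then (1 : ℝ) else 0 := by
    intro k n
    rw [he]
    by_cases h : n = k
    · subst h; simp [lp.single_apply_self]
    · simp [lp.single_apply_ne _ _ _ h, h]
  have hSe : ∀ k, S (e k) = y k := by
    intro k
    refine ContinuousLinearMap.ext fun v => ?_
    rw [hSapp]
    rw [tsum_eq_single k]
    · rw [hee]; simp
    · intro n hn
      rw [hee]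
      simp [hn]
  set R : Linfty →L[ℝ] Y := T.comp S with hR
  have hRe : ∀ k, ε ≤ ‖R (e k)‖ := by
    intro k
    rw [hR, ContinuousLinearMap.comp_apply, hSe]
    exact hTy k
  have hRe0 : ∀ k, R (e k) ≠ 0 := by
    intro k h
    have h2 := hRe k
    rw [h, norm_zero] at h2
    linarith
  -- dual functionals
  have hgd : ∀ k, ∃ g : Y →L[ℝ] ℝ, ‖g‖ = 1 ∧ g (R (e k)) = ‖R (e k)‖ :=
    fun k => exists_dual_vector ℝ _ (norm_ne_zero_iff.2 (hRe0 k))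
  choose gd hgd1 hgd2 using hgd
  -- Rosenthal's lemma applied to the measures `mu R (gd k)`
  have hε4 : 0 < ε / 4 := by linarith
  obtain ⟨m, hm⟩ := exists_nat_ge (‖R‖ / (ε / 4))
  have hμb' : ∀ k, mu R (gd k) Set.univ ≤ m * (ε / 4) := by
    intro k
    refine le_trans (mu_le_norm R (hgd1 k) _) ?_
    rw [div_le_iff₀ hε4] at hm
    linarith
  obtain ⟨M, -, hMinf, hM⟩ :=
    rosenthal_aux (ε / 4) hε4 m (fun k => mu R (gd k))
      (fun k => mu_mono R (hgd1 k))
      (fun k B B' h => mu_superadd R (hgd1 k) B B' h)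
      hμb' Set.univ Set.infinite_univ
  -- the embedding of ℓ∞ onto ℓ∞(M)
  set ι : ℕ → ℕ := fun q => (Set.Infinite.natEmbedding M hMinf q : ℕ) with hι
  have hιinj : Function.Injective ι := fun a b hab =>
    (Set.Infinite.natEmbedding M hMinf).injective (Subtype.ext hab)
  have hιmem : ∀ q, ι q ∈ M := fun q => (Set.Infinite.natEmbedding M hMinf q).2
  obtain ⟨J, hJι, hJz, hJb⟩ := exists_extension_op ι hιinj
  refine ⟨R.comp J, ε / 4, hε4, ?_⟩
  intro a
  rcases eq_or_ne a 0 with rfl | ha0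
  · simp
  · have hna : 0 < ‖a‖ := norm_pos_iff.2 ha0
    obtain ⟨q, hq⟩ : ∃ q, ‖a‖ / 2 < |a q| := by
      by_contra h
      push_neg at h
      have : ‖a‖ ≤ ‖a‖ / 2 := Linfty.norm_le_of_abs_le (by linarith) h
      linarith
    set k := ι q with hk
    have hkM : k ∈ M := hιmem q
    set b : Linfty := J a - (a q) • e k with hbdef
    have hbapp : ∀ n, b n = J a n - a q * e k n := by
      intro n
      rw [hbdef, lp.coeFn_sub, Pi.sub_apply, lp.coeFn_smul, Pi.smul_apply, smul_eq_mul]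
    have hbsupp : ∀ n, n ∉ M \ {k} → b n = 0 := by
      intro n hn
      rw [Set.mem_diff, Set.mem_singleton_iff] at hn
      push_neg at hn
      rw [hbapp]
      by_cases hnM : n ∈ M
      · have hnk : n = k := hn hnM
        subst hnk
        rw [hk, hJι, hee]
        simp
      · have hnr : ¬ ∃ q', ι q' = n := by
          rintro ⟨q', rfl⟩
          exact hnM (hιmem q')
        rw [hJz a n hnr, hee]
        have hnk : n ≠ k := fun h => hnM (h ▸ hkM)
        simp [hnk]
    have hbn : ‖b‖ ≤ ‖a‖ := by
      refine Linfty.norm_le_of_abs_le hna.le fun n => ?_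
      rw [hbapp]
      by_cases hnk : n = k
      · subst hnk
        rw [hk, hJι, hee]
        simp [hna.le]
      · rw [hee]
        simp only [hnk, if_false, mul_zero, sub_zero]
        exact hJb a n
    have hJdecomp : J a = a q • e k + b := by
      rw [hbdef]; abel
    have key : gd k (R (J a)) = a q * gd k (R (e k)) + gd k (R b) := by
      rw [hJdecomp, map_add, map_smul, map_add, map_smul, smul_eq_mul]
    have h1 : ‖a‖ / 2 * ε ≤ |a q * gd k (R (e k))| := by
      rw [abs_mul, hgd2 k, abs_of_nonneg (norm_nonneg _)]
      exact mul_le_mul hq.le (hRe k) hε.le (abs_nonneg _)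
    have h2 : |gd k (R b)| ≤ ‖a‖ * (ε / 4) := by
      refine le_trans (mu_eval R (hgd1 k) (M \ {k}) b hbsupp) ?_
      exact mul_le_mul hbn (hM k hkM) (mu_nonneg R (hgd1 k) _) hna.le
    have h3 : ‖a‖ / 2 * ε - ‖a‖ * (ε / 4) ≤ |gd k (R (J a))| := by
      have h5 : |a q * gd k (R (e k))| ≤ |gd k (R (J a))| + |gd k (R b)| := by
        rw [key]
        have := abs_add_le (a q * gd k (R (e k)) + gd k (R b)) (-(gd k (R b)))
        simpa using this
      linarith
    have h4 : |gd k (R (J a))| ≤ ‖R (J a)‖ := by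
      have := (gd k).le_opNorm (R (J a))
      rwa [hgd1 k, one_mul, Real.norm_eq_abs] at this
    have h6 : (R.comp J) a = R (J a) := rfl
    rw [h6]
    calc ε / 4 * ‖a‖ = ‖a‖ / 2 * ε - ‖a‖ * (ε / 4) := by ring
      _ ≤ |gd k (R (J a))| := h3
      _ ≤ ‖R (J a)‖ := h4

/-- If `X*` has Pelczynski's property (V) and `Y` contains no isomorphic copy
of `ℓ^∞`, then every bounded linear operator `T : X* → Y` is weakly compact. -/
theorem operator_from_dual_weakly_compact
    {X Y : Type} [NormedAddCommGroup X] [NormedSpace ℝ X] [CompleteSpace X]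
    [NormedAddCommGroup Y] [NormedSpace ℝ Y] [CompleteSpace Y]
    (hV : PelczynskiPropertyV (StrongDual ℝ X))
    (hY : ¬ ContainsIsomorphicCopyOfLinfty Y)
    (T : StrongDual ℝ X →L[ℝ] Y) :
    IsWeaklyCompactOperator T := by
  refine hV Y inferInstance inferInstance inferInstance T ?_
  intro x hwuc
  by_contra hns
  exact absurd (not_summable_embeds_linfty T x hwuc hns) hY

end
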